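/- For every k with 1 ≤ k ≤ n, the following identity (relation R_k^+) holds in F_q[x_1,…,x_n,y_1,…,y_n]: Σ_{i=0}^{k−1} Σ_{j=0}^{n−k} (−1)^{i+j+n+1} c_{k−1,i}^q · c*_{n−k,j} · u_{i−j+1}^{q^{min(i+1,j)}} = f_k^q · f*_{n+1−k}. -/

import Mathlib

open MvPolynomial

variable (F : Type) [Field F] [Fintype F] (n : ℕ)

/-- `fX F n k` is the orbit product `f_k` (1-indexed, meaningful for `1 ≤ k ≤ n`). -/
noncomputable def fX (k : ℕ) : MvPolynomial (Fin n ⊕ Fin n) F :=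
  if h : 1 ≤ k ∧ k ≤ n then
    ∏ α : Fin (k - 1) → F,
      (X (Sum.inl ⟨k - 1, by omega⟩) +
        ∑ j : Fin (k - 1), C (α j) * X (Sum.inl ⟨j.val, by omega⟩))
  else 0

/-- `fY F n k` is `f_k^*` (1-indexed), the orbit product of `y_{n+1-k}`. -/
noncomputable def fY (k : ℕ) : MvPolynomial (Fin n ⊕ Fin n) F :=
  if h : 1 ≤ k ∧ k ≤ n then
    ∏ α : Fin (k - 1) → F,
      (X (Sum.inr ⟨n - k, by omega⟩) +
        ∑ j : Fin (k - 1), C (α j) * X (Sum.inr ⟨n - 1 - j.val, by omega⟩))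
  else 0

/-- `uInv F n j` is the invariant `u_j`, for `j : ℤ`. -/
noncomputable def uInv (j : ℤ) : MvPolynomial (Fin n ⊕ Fin n) F :=
  if 0 ≤ j then ∑ k : Fin n, X (Sum.inl k) ^ (Fintype.card F) ^ j.toNat * X (Sum.inr k)
  else ∑ k : Fin n, X (Sum.inl k) * X (Sum.inr k) ^ (Fintype.card F) ^ (-j).toNat

/-- `cX F n s t` is the Dickson-type invariant `c_{s,t}` (in the `x`-variables):
the sum over strictly increasing sequences `1 ≤ j_1 < ⋯ < j_{s-t} ≤ s` (encoded as
strictly monotone functions `Fin (s-t) → Fin s`) of `∏_l f_{j_l}^{(q-1)·q^{t+l-j_l}}`. -/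
noncomputable def cX (s t : ℕ) : MvPolynomial (Fin n ⊕ Fin n) F :=
  if s ≤ n then
    ∑ g ∈ Finset.univ.filter (fun g : Fin (s - t) → Fin s => ∀ a b : Fin (s - t), a < b → g a < g b),
      ∏ l : Fin (s - t),
        fX F n ((g l).val + 1) ^ ((Fintype.card F - 1) * (Fintype.card F) ^ (t + l.val - (g l).val))
  else 0

/-- `cY F n s t` is `c_{s,t}^*` (in the `y`-variables). -/
noncomputable def cY (s t : ℕ) : MvPolynomial (Fin n ⊕ Fin n) F :=
  if s ≤ n then
    ∑ g ∈ Finset.univ.filter (fun g : Fin (s - t) → Fin s => ∀ a b : Fin (s - t), a < b → g a < g b),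
      ∏ l : Fin (s - t),
        fY F n ((g l).val + 1) ^ ((Fintype.card F - 1) * (Fintype.card F) ^ (t + l.val - (g l).val))
  else 0

lemma RK.neg_one_pow_congr {R : Type*} [Ring R] {a b : ℕ} (h : a % 2 = b % 2) :
    (-1 : R) ^ a = (-1) ^ b := by
  rw [neg_one_pow_eq_pow_mod_two, h, ← neg_one_pow_eq_pow_mod_two]

lemma RK.sm_gap {a b : ℕ} {g : Fin a → Fin b} (hg : StrictMono g) (lv c : ℕ)
    (h : lv + c < a) : (g ⟨lv, by omega⟩ : ℕ) + c ≤ g ⟨lv + c, h⟩ := by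
  induction c with
  | zero => simp
  | succ c ih =>
    have h' : lv + c < a := by omega
    have h1 := ih h'
    have h2 : g ⟨lv + c, h'⟩ < g ⟨lv + (c+1), h⟩ := hg (by simp [Fin.lt_def])
    rw [Fin.lt_def] at h2
    omega

lemma RK.exists_qpow_hom (σ : Type) (t : ℕ) :
    ∃ φ : MvPolynomial σ F →+* MvPolynomial σ F,
      ∀ x, φ x = x ^ (Fintype.card F) ^ t := by
  classical
  set p := ringChar F with hp
  haveI : CharP F p := ringChar.charP F
  haveI hfact : Fact p.Prime := ⟨CharP.char_is_prime F p⟩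
  obtain ⟨r, hpr, hcard⟩ := FiniteField.card F p
  haveI : CharP (MvPolynomial σ F) p := inferInstance
  haveI : ExpChar (MvPolynomial σ F) p := inferInstance
  refine ⟨iterateFrobenius (MvPolynomial σ F) p ((r : ℕ) * t), fun x => ?_⟩
  rw [iterateFrobenius_def, hcard, pow_mul]

/-- `∏ (X - C a) = X^q - X` in `F[X]`. -/
lemma RK.prod_X_sub_C :
    ∏ a : F, (Polynomial.X - Polynomial.C a) = Polynomial.X ^ (Fintype.card F) - Polynomial.X := by
  classical
  have hq : 1 < Fintype.card F := Fintype.one_lt_card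
  have hmonic : (Polynomial.X ^ (Fintype.card F) - Polynomial.X : Polynomial F).Monic := by
    have h1 : (Polynomial.X : Polynomial F).degree < (Fintype.card F : ℕ) := by
      rw [Polynomial.degree_X]
      exact_mod_cast hq
    exact Polynomial.monic_X_pow_sub h1
  have hroots := FiniteField.roots_X_pow_card_sub_X F
  have hdeg := FiniteField.X_pow_card_sub_X_natDegree_eq F hq
  have hcard : Multiset.card (Polynomial.X ^ (Fintype.card F) - Polynomial.X : Polynomial F).roots
      = (Polynomial.X ^ (Fintype.card F) - Polynomial.X : Polynomial F).natDegree := by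
    rw [hroots, hdeg]; simp
  have := Polynomial.prod_multiset_X_sub_C_of_monic_of_roots_card_eq hmonic hcard
  rw [hroots] at this
  rw [← this]
  rfl

/-- scalar version: for any ring hom `φ : F →+* K`, `∏ β, (v + φ β) = v^q - v`. -/
lemma RK.prod_add_scalar {K : Type*} [CommRing K] (φ : F →+* K) (v : K) :
    ∏ β : F, (v + φ β) = v ^ (Fintype.card F) - v := by
  classical
  have h1 : ∏ a : F, (Polynomial.X + Polynomial.C a)
      = Polynomial.X ^ (Fintype.card F) - Polynomial.X := by
    rw [← RK.prod_X_sub_C F]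
    exact Fintype.prod_equiv (Equiv.neg F) _ _ (by intro a; simp [sub_eq_add_neg])
  have := congrArg (Polynomial.eval₂ φ v) h1
  rw [Polynomial.eval₂_finset_prod] at this
  simpa using this

/-- key product identity: `∏_{β : F} (a + C β * b) = a^q - b^(q-1) * a`. -/
lemma RK.prod_linear {σ : Type} (a b : MvPolynomial σ F) :
    ∏ β : F, (a + MvPolynomial.C β * b)
      = a ^ (Fintype.card F) - b ^ (Fintype.card F - 1) * a := by
  classical
  have hq : 1 < Fintype.card F := Fintype.one_lt_card
  rcases eq_or_ne b 0 with rb | rb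
  · subst rb
    simp only [mul_zero, add_zero, Finset.prod_const, Finset.card_univ]
    rw [zero_pow (by omega : Fintype.card F - 1 ≠ 0), zero_mul, sub_zero]
  · have hinj := IsFractionRing.injective (MvPolynomial σ F) (FractionRing (MvPolynomial σ F))
    apply hinj
    set K := FractionRing (MvPolynomial σ F)
    set i := algebraMap (MvPolynomial σ F) K with hi
    have hb' : i b ≠ 0 := fun h => rb (hinj (by simpa using h))
    rw [map_prod, map_sub, map_mul, map_pow, map_pow]
    set v : K := i a * (i b)⁻¹ with hv
    have hbv : i b * v = i a := by
      rw [hv, mul_comm (i a), ← mul_assoc, mul_inv_cancel₀ hb', one_mul]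
    calc ∏ β : F, i (a + MvPolynomial.C β * b)
        = ∏ β : F, (i b * (v + (i.comp MvPolynomial.C) β)) := by
          apply Finset.prod_congr rfl; intro β _
          rw [map_add, map_mul, mul_add, hbv, RingHom.comp_apply, mul_comm (i b)]
      _ = (i b) ^ (Fintype.card F) * ∏ β : F, (v + (i.comp MvPolynomial.C) β) := by
          rw [Finset.prod_mul_distrib, Finset.prod_const, Finset.card_univ]
      _ = (i b) ^ (Fintype.card F) * (v ^ (Fintype.card F) - v) := by
          rw [RK.prod_add_scalar F (i.comp MvPolynomial.C) v]
      _ = (i a) ^ (Fintype.card F) - (i b) ^ (Fintype.card F - 1) * i a := by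
          rw [mul_sub, ← mul_pow, hbv]
          congr 1
          have h2 : (i b) ^ (Fintype.card F) = (i b) ^ (Fintype.card F - 1) * i b := by
            rw [← pow_succ]; congr 1; omega
          rw [h2, mul_assoc, hbv]

variable {σ : Type} (w : ℕ → MvPolynomial σ F)

noncomputable def RK.phiG (s : ℕ) (P : MvPolynomial σ F) : MvPolynomial σ F :=
  ∏ α : Fin s → F, (P + ∑ j : Fin s, MvPolynomial.C (α j) * w j.val)

noncomputable def RK.fG (k : ℕ) : MvPolynomial σ F := RK.phiG F w (k - 1) (w (k - 1))

noncomputable def RK.cG (m s : ℕ) : MvPolynomial σ F :=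
  ∑ g ∈ Finset.univ.filter (fun g : Fin m → Fin s => StrictMono g),
    ∏ l : Fin m,
      RK.fG F w ((g l).val + 1) ^
        ((Fintype.card F - 1) * (Fintype.card F) ^ (s - m + l.val - (g l).val))

lemma RK.cG_zero (s : ℕ) : RK.cG F w 0 s = 1 := by
  classical
  rw [RK.cG]
  have : (Finset.univ.filter (fun g : Fin 0 → Fin s => StrictMono g)) = Finset.univ := by
    apply Finset.filter_true_of_mem
    intro g _
    intro a b hab
    exact a.elim0
  rw [this]
  simp

lemma RK.cG_of_lt {m s : ℕ} (h : s < m) : RK.cG F w m s = 0 := by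
  classical
  rw [RK.cG]
  convert Finset.sum_empty
  rw [Finset.filter_eq_empty_iff]
  intro g _
  intro hg
  have := Fintype.card_le_of_injective g hg.injective
  simp at this; omega

lemma RK.phiG_zero (s : ℕ) (P : MvPolynomial σ F) (j0 : Fin s) (hw : w j0.val = P) :
    RK.phiG F w s P = 0 := by
  classical
  rw [RK.phiG]
  apply Finset.prod_eq_zero
    (Finset.mem_univ (fun j : Fin s => if j = j0 then (-1 : F) else 0))
  have hsum : ∑ j : Fin s,
      MvPolynomial.C (if j = j0 then (-1 : F) else 0) * w j.val = -P := by
    rw [Finset.sum_eq_single j0]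
    · simp [hw]
    · intro b _ hb; simp [hb]
    · intro h; exact absurd (Finset.mem_univ j0) h
  rw [hsum, add_neg_cancel]

lemma RK.cG_rec (m s : ℕ) :
    RK.cG F w (m + 1) (s + 1)
      = RK.cG F w (m + 1) s ^ (Fintype.card F)
        + RK.fG F w (s + 1) ^ (Fintype.card F - 1) * RK.cG F w m s := by
  classical
  obtain ⟨φ, hφ⟩ := RK.exists_qpow_hom F σ 1
  have hφ1 : ∀ x : MvPolynomial σ F, x ^ Fintype.card F = φ x := by
    intro x; rw [hφ, pow_one]
  rw [RK.cG, ← Finset.sum_filter_add_sum_filter_not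
    (Finset.univ.filter (fun g : Fin (m+1) → Fin (s+1) => StrictMono g))
    (fun g => g (Fin.last m) = Fin.last s)]
  have h2 : ∑ g ∈ (Finset.univ.filter (fun g : Fin (m+1) → Fin (s+1) => StrictMono g)).filter
        (fun g => ¬ g (Fin.last m) = Fin.last s),
      ∏ l : Fin (m+1), RK.fG F w ((g l).val + 1) ^
        ((Fintype.card F - 1) * Fintype.card F ^ (s + 1 - (m+1) + l.val - (g l).val))
      = RK.cG F w (m + 1) s ^ Fintype.card F := by
    rw [RK.cG, hφ1, map_sum]
    refine Finset.sum_bij' (i := fun (g : Fin (m+1) → Fin (s+1))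
        (hg : g ∈ (Finset.univ.filter (fun g : Fin (m+1) → Fin (s+1) => StrictMono g)).filter
          (fun g => ¬ g (Fin.last m) = Fin.last s)) =>
        fun l : Fin (m+1) => Fin.castLT (g l) (by
          rw [Finset.mem_filter, Finset.mem_filter] at hg
          obtain ⟨⟨-, hsm⟩, hne⟩ := hg
          have hne' : (g (Fin.last m)).val ≠ s := by
            intro hv; exact hne (Fin.ext (by simpa using hv))
          have h1 : (g l).val ≤ (g (Fin.last m)).val :=
            Fin.le_def.mp (hsm.monotone (Fin.le_last l))
          have h2 := (g (Fin.last m)).isLt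
          omega))
      (j := fun (g' : Fin (m+1) → Fin s) (hg' : _) => fun l => (g' l).castSucc)
      ?_ ?_ ?_ ?_ ?_
    · intro g hg
      rw [Finset.mem_filter, Finset.mem_filter] at hg
      rw [Finset.mem_filter]
      refine ⟨Finset.mem_univ _, ?_⟩
      intro a b hab
      have := Fin.lt_def.mp (hg.1.2 hab)
      simp only [Fin.lt_def, Fin.coe_castLT]
      exact this
    · intro g' hg'
      rw [Finset.mem_filter] at hg'
      rw [Finset.mem_filter, Finset.mem_filter]
      refine ⟨⟨Finset.mem_univ _, ?_⟩, ?_⟩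
      · intro a b hab
        have := Fin.lt_def.mp (hg'.2 hab)
        simp only [Fin.lt_def, Fin.coe_castSucc]
        exact this
      · intro hcontra
        have h4 : ((g' (Fin.last m)).castSucc : Fin (s+1)) = Fin.last s := hcontra
        have h5 := congrArg Fin.val h4
        rw [Fin.coe_castSucc, Fin.val_last] at h5
        exact absurd h5 (Nat.ne_of_lt (g' (Fin.last m)).isLt)
    · intro g hg
      funext l
      apply Fin.ext
      simp only [Fin.coe_castSucc, Fin.coe_castLT]
    · intro g' hg'
      funext l
      apply Fin.ext
      simp only [Fin.coe_castSucc, Fin.coe_castLT]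
    · intro g hg
      rw [Finset.mem_filter, Finset.mem_filter] at hg
      obtain ⟨⟨-, hsm⟩, hne⟩ := hg
      have hne' : (g (Fin.last m)).val ≠ s := by
        intro hv; exact hne (Fin.ext (by simpa using hv))
      have hlast : (g (Fin.last m)).val < s := by
        have := (g (Fin.last m)).isLt; omega
      have hcard : m + 1 ≤ s := by
        have h := RK.sm_gap hsm 0 m (by omega)
        have he : (⟨(0:ℕ) + m, by omega⟩ : Fin (m+1)) = Fin.last m := by
          apply Fin.ext; simp
        rw [he] at h
        omega
      rw [map_prod]
      refine Finset.prod_congr rfl ?_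
      intro l _
      have hgap : (g l).val + (m - l.val) ≤ (g (Fin.last m)).val := by
        have h := RK.sm_gap hsm l.val (m - l.val) (by omega)
        have he : (⟨l.val + (m - l.val), by omega⟩ : Fin (m+1)) = Fin.last m := by
          apply Fin.ext; simp; omega
        have he2 : (⟨l.val, by omega⟩ : Fin (m+1)) = l := Fin.ext rfl
        rw [he, he2] at h
        exact h
      show RK.fG F w ((g l).val + 1) ^
          ((Fintype.card F - 1) * Fintype.card F ^ (s + 1 - (m+1) + l.val - (g l).val))
        = φ (RK.fG F w ((g l).val + 1) ^
          ((Fintype.card F - 1) * Fintype.card F ^ (s - (m+1) + l.val - (g l).val)))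
      rw [map_pow, ← hφ1, ← pow_mul]
      congr 1
      have hl : l.val ≤ m := by omega
      have hexp : s + 1 - (m+1) + l.val - (g l).val
          = (s - (m+1) + l.val - (g l).val) + 1 := by omega
      rw [hexp, pow_succ]
      ring
  have h1 : ∑ g ∈ (Finset.univ.filter (fun g : Fin (m+1) → Fin (s+1) => StrictMono g)).filter
        (fun g => g (Fin.last m) = Fin.last s),
      ∏ l : Fin (m+1), RK.fG F w ((g l).val + 1) ^
        ((Fintype.card F - 1) * Fintype.card F ^ (s + 1 - (m+1) + l.val - (g l).val))
      = RK.fG F w (s + 1) ^ (Fintype.card F - 1) * RK.cG F w m s := by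
    rw [RK.cG, Finset.mul_sum]
    refine Finset.sum_bij' (i := fun (g : Fin (m+1) → Fin (s+1))
        (hg : g ∈ (Finset.univ.filter (fun g : Fin (m+1) → Fin (s+1) => StrictMono g)).filter
          (fun g => g (Fin.last m) = Fin.last s)) =>
        fun l : Fin m => Fin.castLT (g l.castSucc) (by
          rw [Finset.mem_filter, Finset.mem_filter] at hg
          obtain ⟨⟨-, hsm⟩, hlast⟩ := hg
          have h1 : g l.castSucc < g (Fin.last m) := hsm (Fin.castSucc_lt_last l)
          rw [hlast] at h1
          have := Fin.lt_def.mp h1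
          simpa using this))
      (j := fun (g' : Fin m → Fin s) (hg' : _) =>
        Fin.snoc (fun l => (g' l).castSucc) (Fin.last s))
      ?_ ?_ ?_ ?_ ?_
    · intro g hg
      rw [Finset.mem_filter, Finset.mem_filter] at hg
      rw [Finset.mem_filter]
      refine ⟨Finset.mem_univ _, ?_⟩
      intro a b hab
      have hab' : a.castSucc < b.castSucc := by
        simp only [Fin.lt_def, Fin.coe_castSucc] at hab ⊢; exact hab
      have := Fin.lt_def.mp (hg.1.2 hab')
      simp only [Fin.lt_def, Fin.coe_castLT]
      exact this
    · intro g' hg'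
      rw [Finset.mem_filter] at hg'
      rw [Finset.mem_filter, Finset.mem_filter]
      refine ⟨⟨Finset.mem_univ _, ?_⟩, by simp⟩
      intro a b hab
      rcases Fin.eq_castSucc_or_eq_last b with ⟨b', rfl⟩ | rfl
      · have ha : a < Fin.last m := lt_trans hab (Fin.castSucc_lt_last b')
        obtain ⟨a', rfl⟩ := (Fin.eq_castSucc_or_eq_last a).resolve_right (by
          intro h; subst h; exact absurd ha (lt_irrefl _))
        simp only [Fin.snoc_castSucc]
        have hab2 : a' < b' := by
          simp only [Fin.lt_def, Fin.coe_castSucc] at hab; exact hab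
        have := Fin.lt_def.mp (hg'.2 hab2)
        simp only [Fin.lt_def, Fin.coe_castSucc]
        exact this
      · obtain ⟨a', rfl⟩ := (Fin.eq_castSucc_or_eq_last a).resolve_right (by
          intro h; subst h; exact absurd hab (lt_irrefl _))
        simp only [Fin.snoc_castSucc, Fin.snoc_last]
        exact Fin.castSucc_lt_last _
    · intro g hg
      rw [Finset.mem_filter, Finset.mem_filter] at hg
      funext l
      rcases Fin.eq_castSucc_or_eq_last l with ⟨l', rfl⟩ | rfl
      · simp only [Fin.snoc_castSucc]
        apply Fin.ext
        simp only [Fin.coe_castSucc, Fin.coe_castLT]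
      · simp only [Fin.snoc_last]
        exact hg.2.symm
    · intro g' hg'
      funext l
      simp only [Fin.snoc_castSucc]
      apply Fin.ext
      simp only [Fin.coe_castSucc, Fin.coe_castLT]
    · intro g hg
      rw [Finset.mem_filter, Finset.mem_filter] at hg
      obtain ⟨⟨-, hsm⟩, hlast⟩ := hg
      have hlastv : (g (Fin.last m)).val = s := by rw [hlast]; simp
      have hms : m ≤ s := by
        have h := RK.sm_gap hsm 0 m (by omega)
        have he : (⟨(0:ℕ) + m, by omega⟩ : Fin (m+1)) = Fin.last m := by
          apply Fin.ext; simp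
        rw [he] at h
        omega
      rw [Fin.prod_univ_castSucc, mul_comm]
      congr 1
      · -- last factor
        rw [hlastv]
        have he0 : s + 1 - (m + 1) + (Fin.last m).val - s = 0 := by
          simp only [Fin.val_last]; omega
        rw [he0, pow_zero, mul_one]
      · refine Finset.prod_congr rfl ?_
        intro l _
        show RK.fG F w ((g l.castSucc).val + 1) ^
            ((Fintype.card F - 1) * Fintype.card F ^ (s + 1 - (m+1) + l.castSucc.val - (g l.castSucc).val))
          = RK.fG F w ((g l.castSucc).val + 1) ^
            ((Fintype.card F - 1) * Fintype.card F ^ (s - m + l.val - (g l.castSucc).val))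
        have hE : s + 1 - (m+1) + l.castSucc.val - (g l.castSucc).val
            = s - m + l.val - (g l.castSucc).val := by
          simp only [Fin.coe_castSucc]; omega
        rw [hE]
  rw [h1, h2, add_comm]


lemma RK.phiG_eq (s : ℕ) (P : MvPolynomial σ F) :
    RK.phiG F w s P
      = ∑ t ∈ Finset.range (s + 1),
          (-1 : MvPolynomial σ F) ^ (s - t) * RK.cG F w (s - t) s * P ^ (Fintype.card F) ^ t := by
  classical
  induction s generalizing P with
  | zero =>
    rw [RK.phiG]
    rw [Fintype.prod_unique (fun α : Fin 0 → F => P + ∑ j : Fin 0, C (α j) * w j.val)]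
    simp [RK.cG_zero]
  | succ s ih =>
    obtain ⟨φ, hφ⟩ := RK.exists_qpow_hom F σ 1
    have hφ1 : ∀ x : MvPolynomial σ F, x ^ Fintype.card F = φ x := by
      intro x; rw [hφ, pow_one]
    -- step 1: split the product over `Fin (s+1) → F`
    have step1 : RK.phiG F w (s+1) P
        = ∏ β : F, RK.phiG F w s (P + C β * w s) := by
      rw [RK.phiG]
      rw [← (Fin.insertNthEquiv (fun _ : Fin (s+1) => F) (Fin.last s)).prod_comp
        (fun α => P + ∑ j : Fin (s+1), C (α j) * w j.val)]
      rw [Fintype.prod_prod_type]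
      refine Finset.prod_congr rfl ?_
      intro β _
      rw [RK.phiG]
      refine Finset.prod_congr rfl ?_
      intro α _
      have hsymm : (Fin.insertNthEquiv (fun _ : Fin (s+1) => F) (Fin.last s)) (β, α)
          = Fin.snoc α β := by
        simp [Fin.insertNthEquiv, Fin.insertNth_last']
      rw [hsymm]
      rw [Fin.sum_univ_castSucc]
      simp only [Fin.snoc_castSucc, Fin.snoc_last, Fin.coe_castSucc, Fin.val_last]
      ring
    rw [step1]
    -- step 2: expand each factor using ih and Frobenius
    have hqt : ∀ t : ℕ, ∀ x y : MvPolynomial σ F,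
        (x + y) ^ (Fintype.card F) ^ t = x ^ (Fintype.card F) ^ t + y ^ (Fintype.card F) ^ t := by
      intro t x y
      obtain ⟨ψ, hψ⟩ := RK.exists_qpow_hom F σ t
      rw [← hψ, ← hψ, ← hψ, map_add]
    have hqtC : ∀ t : ℕ, ∀ β : F, (C β : MvPolynomial σ F) ^ (Fintype.card F) ^ t = C β := by
      intro t β
      rw [← map_pow, FiniteField.pow_card_pow]
    have step2 : ∀ β : F, RK.phiG F w s (P + C β * w s)
        = (∑ t ∈ Finset.range (s + 1),
            (-1 : MvPolynomial σ F) ^ (s - t) * RK.cG F w (s - t) s * P ^ (Fintype.card F) ^ t)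
          + C β * RK.fG F w (s + 1) := by
      intro β
      rw [ih]
      have : ∀ t ∈ Finset.range (s+1),
          (-1 : MvPolynomial σ F) ^ (s - t) * RK.cG F w (s - t) s
              * (P + C β * w s) ^ (Fintype.card F) ^ t
            = (-1 : MvPolynomial σ F) ^ (s - t) * RK.cG F w (s - t) s * P ^ (Fintype.card F) ^ t
              + C β * ((-1 : MvPolynomial σ F) ^ (s - t) * RK.cG F w (s - t) s
                  * (w s) ^ (Fintype.card F) ^ t) := by
        intro t _
        rw [hqt t, mul_pow, hqtC t]
        ring
      rw [Finset.sum_congr rfl this, Finset.sum_add_distrib, ← Finset.mul_sum]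
      congr 1
      have hfg : RK.fG F w (s+1) = RK.phiG F w s (w s) := by
        rw [RK.fG]; norm_num
      rw [hfg, ih]
    rw [Finset.prod_congr rfl (fun β _ => step2 β)]
    -- step 3: apply prod_linear
    rw [RK.prod_linear]
    -- step 4: rearrange sums
    set A := ∑ t ∈ Finset.range (s + 1),
        (-1 : MvPolynomial σ F) ^ (s - t) * RK.cG F w (s - t) s * P ^ (Fintype.card F) ^ t with hA
    set B := RK.fG F w (s + 1) with hB
    have hAq : A ^ Fintype.card F
        = ∑ t ∈ Finset.range (s + 1),
            (-1 : MvPolynomial σ F) ^ (s - t) * (RK.cG F w (s - t) s) ^ (Fintype.card F)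
              * P ^ (Fintype.card F) ^ (t+1) := by
      rw [hφ1, hA, map_sum]
      refine Finset.sum_congr rfl ?_
      intro t _
      rw [map_mul, map_mul, ← hφ1, ← hφ1, ← hφ1]
      have h1 : ((-1 : MvPolynomial σ F) ^ (s - t)) ^ Fintype.card F
          = (-1 : MvPolynomial σ F) ^ (s - t) := by
        have hneg : (-1 : MvPolynomial σ F) ^ Fintype.card F = -1 := by
          rw [hφ1, map_neg, map_one]
        rw [← pow_mul, mul_comm, pow_mul, hneg]
      rw [h1]
      rw [← pow_mul, ← pow_succ]
    have hq0 : Fintype.card F ≠ 0 := Fintype.card_ne_zero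
    -- final bookkeeping
    rw [hAq]
    conv_rhs => rw [Finset.sum_range_succ]
    have htop : (-1 : MvPolynomial σ F) ^ (s + 1 - (s + 1)) * RK.cG F w (s + 1 - (s + 1)) (s + 1)
        * P ^ (Fintype.card F) ^ (s + 1) = P ^ (Fintype.card F) ^ (s + 1) := by
      have h0 : s + 1 - (s + 1) = 0 := by omega
      rw [h0, RK.cG_zero, pow_zero, one_mul, one_mul]
    rw [htop]
    have hsplit : ∀ t ∈ Finset.range (s + 1),
        (-1 : MvPolynomial σ F) ^ (s + 1 - t) * RK.cG F w (s + 1 - t) (s + 1)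
            * P ^ (Fintype.card F) ^ t
          = -((-1 : MvPolynomial σ F) ^ (s - t) * (RK.cG F w ((s - t) + 1) s) ^ (Fintype.card F)
              * P ^ (Fintype.card F) ^ t)
            + -((-1 : MvPolynomial σ F) ^ (s - t)
                * (B ^ (Fintype.card F - 1) * RK.cG F w (s - t) s) * P ^ (Fintype.card F) ^ t) := by
      intro t ht
      rw [Finset.mem_range] at ht
      have h1 : s + 1 - t = (s - t) + 1 := by omega
      rw [h1, RK.cG_rec, pow_succ]
      ring
    rw [Finset.sum_congr rfl hsplit, Finset.sum_add_distrib]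
    have hY : ∑ t ∈ Finset.range (s + 1),
        -((-1 : MvPolynomial σ F) ^ (s - t)
            * (B ^ (Fintype.card F - 1) * RK.cG F w (s - t) s) * P ^ (Fintype.card F) ^ t)
        = -(B ^ (Fintype.card F - 1) * A) := by
      rw [hA, Finset.mul_sum, ← Finset.sum_neg_distrib]
      refine Finset.sum_congr rfl ?_
      intro t _
      ring
    have hX : ∑ t ∈ Finset.range (s + 1),
        -((-1 : MvPolynomial σ F) ^ (s - t) * (RK.cG F w ((s - t) + 1) s) ^ (Fintype.card F)
            * P ^ (Fintype.card F) ^ t)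
        = -(P ^ (Fintype.card F) ^ (s + 1))
          + ∑ t ∈ Finset.range (s + 1),
              (-1 : MvPolynomial σ F) ^ (s - t) * (RK.cG F w (s - t) s) ^ (Fintype.card F)
                * P ^ (Fintype.card F) ^ (t + 1) := by
      rw [Finset.sum_range_succ'] -- peel t = 0 on LHS
      conv_rhs => rw [Finset.sum_range_succ]
      have hb0 : -((-1 : MvPolynomial σ F) ^ (s - 0) * (RK.cG F w ((s - 0) + 1) s) ^ (Fintype.card F)
          * P ^ (Fintype.card F) ^ 0) = 0 := by
        rw [RK.cG_of_lt F w (by omega : s < (s - 0) + 1), zero_pow hq0]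
        ring
      have htopa : (-1 : MvPolynomial σ F) ^ (s - s) * (RK.cG F w (s - s) s) ^ (Fintype.card F)
          * P ^ (Fintype.card F) ^ (s + 1) = P ^ (Fintype.card F) ^ (s + 1) := by
        have h0 : s - s = 0 := by omega
        rw [h0, RK.cG_zero, pow_zero, one_pow, one_mul, one_mul]
      rw [hb0, htopa, add_zero]
      have hterm : ∀ t ∈ Finset.range s,
          -((-1 : MvPolynomial σ F) ^ (s - (t + 1))
              * (RK.cG F w ((s - (t + 1)) + 1) s) ^ (Fintype.card F)
              * P ^ (Fintype.card F) ^ (t + 1))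
            = (-1 : MvPolynomial σ F) ^ (s - t) * (RK.cG F w (s - t) s) ^ (Fintype.card F)
              * P ^ (Fintype.card F) ^ (t + 1) := by
        intro t ht
        rw [Finset.mem_range] at ht
        have h2 : (s - (t + 1)) + 1 = s - t := by omega
        have h3 : s - t = (s - (t + 1)) + 1 := by omega
        have h4 : (-1 : MvPolynomial σ F) ^ (s - t) = -(-1 : MvPolynomial σ F) ^ (s - (t + 1)) := by
          rw [h3, pow_succ]; ring
        rw [h2, h4]
        ring
      rw [Finset.sum_congr rfl hterm]
      ring
    rw [hY, hX]
    ring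

-- the variable families
noncomputable def RK.wX : ℕ → MvPolynomial (Fin n ⊕ Fin n) F :=
  fun m => if h : m < n then X (Sum.inl ⟨m, h⟩) else 0

noncomputable def RK.wY : ℕ → MvPolynomial (Fin n ⊕ Fin n) F :=
  fun m => if h : m < n then X (Sum.inr ⟨n - 1 - m, by omega⟩) else 0

lemma RK.fX_eq (k : ℕ) (hk1 : 1 ≤ k) (hk2 : k ≤ n) :
    fX F n k = RK.fG F (RK.wX F n) k := by
  rw [fX, dif_pos ⟨hk1, hk2⟩, RK.fG, RK.phiG]
  apply Finset.prod_congr rfl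
  intro α _
  congr 1
  · rw [RK.wX, dif_pos (by omega : k - 1 < n)]
  · apply Finset.sum_congr rfl
    intro j _
    rw [RK.wX, dif_pos (by omega : j.val < n)]

lemma RK.fY_eq (k : ℕ) (hk1 : 1 ≤ k) (hk2 : k ≤ n) :
    fY F n k = RK.fG F (RK.wY F n) k := by
  rw [fY, dif_pos ⟨hk1, hk2⟩, RK.fG, RK.phiG]
  apply Finset.prod_congr rfl
  intro α _
  congr 1
  · rw [RK.wY, dif_pos (by omega : k - 1 < n)]
    congr 2
    simp only [Fin.mk.injEq]
    omega
  · apply Finset.sum_congr rfl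
    intro j _
    rw [RK.wY, dif_pos (by omega : j.val < n)]

lemma RK.cX_eq (s t : ℕ) (hs : s ≤ n) (hts : t ≤ s) :
    cX F n s t = RK.cG F (RK.wX F n) (s - t) s := by
  classical
  rw [cX, if_pos hs, RK.cG]
  have hset : (Finset.univ.filter
        (fun g : Fin (s - t) → Fin s => ∀ a b : Fin (s - t), a < b → g a < g b))
      = (Finset.univ.filter (fun g : Fin (s - t) → Fin s => StrictMono g)) := by
    apply Finset.filter_congr
    intro g _
    constructor
    · intro h a b hab; exact h a b hab
    · intro h a b hab; exact h hab
  rw [hset]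
  apply Finset.sum_congr rfl
  intro g hg
  apply Finset.prod_congr rfl
  intro l _
  rw [RK.fX_eq F n ((g l).val + 1) (by omega) (by have := (g l).isLt; omega)]
  have hE : t + l.val - (g l).val = s - (s - t) + l.val - (g l).val := by omega
  rw [hE]

lemma RK.cY_eq (s t : ℕ) (hs : s ≤ n) (hts : t ≤ s) :
    cY F n s t = RK.cG F (RK.wY F n) (s - t) s := by
  classical
  rw [cY, if_pos hs, RK.cG]
  have hset : (Finset.univ.filter
        (fun g : Fin (s - t) → Fin s => ∀ a b : Fin (s - t), a < b → g a < g b))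
      = (Finset.univ.filter (fun g : Fin (s - t) → Fin s => StrictMono g)) := by
    apply Finset.filter_congr
    intro g _
    constructor
    · intro h a b hab; exact h a b hab
    · intro h a b hab; exact h hab
  rw [hset]
  apply Finset.sum_congr rfl
  intro g hg
  apply Finset.prod_congr rfl
  intro l _
  rw [RK.fY_eq F n ((g l).val + 1) (by omega) (by have := (g l).isLt; omega)]
  have hE : t + l.val - (g l).val = s - (s - t) + l.val - (g l).val := by omega
  rw [hE]

lemma RK.uInv_pow (i j : ℕ) :
    uInv F n ((i : ℤ) - (j : ℤ) + 1) ^ (Fintype.card F ^ min (i + 1) j)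
      = ∑ m : Fin n,
          X (Sum.inl m) ^ (Fintype.card F) ^ (i + 1) * X (Sum.inr m) ^ (Fintype.card F) ^ j := by
  classical
  rcases le_or_gt j (i + 1) with hj | hj
  · have h0 : (0:ℤ) ≤ (i : ℤ) - (j : ℤ) + 1 := by omega
    rw [uInv, if_pos h0]
    have hm : min (i + 1) j = j := by omega
    rw [hm]
    obtain ⟨ψ, hψ⟩ := RK.exists_qpow_hom F (Fin n ⊕ Fin n) j
    rw [← hψ, map_sum]
    apply Finset.sum_congr rfl
    intro m _
    rw [map_mul, hψ, hψ, ← pow_mul, ← pow_add]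
    have ht : ((i : ℤ) - (j : ℤ) + 1).toNat + j = i + 1 := by omega
    rw [ht]
  · have h0 : ¬ (0:ℤ) ≤ (i : ℤ) - (j : ℤ) + 1 := by omega
    rw [uInv, if_neg h0]
    have hm : min (i + 1) j = i + 1 := by omega
    rw [hm]
    obtain ⟨ψ, hψ⟩ := RK.exists_qpow_hom F (Fin n ⊕ Fin n) (i + 1)
    rw [← hψ, map_sum]
    apply Finset.sum_congr rfl
    intro m _
    rw [map_mul, hψ, hψ, ← pow_mul, ← pow_add]
    have ht : (-((i : ℤ) - (j : ℤ) + 1)).toNat + (i + 1) = j := by omega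
    rw [ht]


/-- Relation `R_k^+`. -/
theorem relation_Rk_plus (k : ℕ) (hk1 : 1 ≤ k) (hk2 : k ≤ n) :
    ∑ i ∈ Finset.range k, ∑ j ∈ Finset.range (n - k + 1),
      (-1 : MvPolynomial (Fin n ⊕ Fin n) F) ^ (i + j + n + 1) *
        cX F n (k - 1) i ^ (Fintype.card F) * cY F n (n - k) j *
        uInv F n ((i : ℤ) - (j : ℤ) + 1) ^ (Fintype.card F ^ min (i + 1) j)
    = fX F n k ^ (Fintype.card F) * fY F n (n + 1 - k) := by
  classical
  have hq1 : 1 < Fintype.card F := Fintype.one_lt_card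
  obtain ⟨φ, hφ⟩ := RK.exists_qpow_hom F (Fin n ⊕ Fin n) 1
  have hφ1 : ∀ x : MvPolynomial (Fin n ⊕ Fin n) F, x ^ Fintype.card F = φ x := fun x => by
    rw [hφ, pow_one]
  have hneg : (-1 : MvPolynomial (Fin n ⊕ Fin n) F) ^ Fintype.card F = -1 := by
    rw [hφ1, map_neg, map_one]
  have hk1' : k - 1 + 1 = k := by omega
  -- expansion of the phi's
  have hA : ∀ m : Fin n,
      RK.phiG F (RK.wX F n) (k - 1) (X (Sum.inl m))
        = ∑ i ∈ Finset.range k,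
            (-1 : MvPolynomial (Fin n ⊕ Fin n) F) ^ (k - 1 - i)
              * RK.cG F (RK.wX F n) (k - 1 - i) (k - 1)
              * X (Sum.inl m) ^ (Fintype.card F) ^ i := by
    intro m
    rw [RK.phiG_eq, hk1']
  have hB : ∀ m : Fin n,
      RK.phiG F (RK.wY F n) (n - k) (X (Sum.inr m))
        = ∑ j ∈ Finset.range (n - k + 1),
            (-1 : MvPolynomial (Fin n ⊕ Fin n) F) ^ (n - k - j)
              * RK.cG F (RK.wY F n) (n - k - j) (n - k)
              * X (Sum.inr m) ^ (Fintype.card F) ^ j := by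
    intro m
    rw [RK.phiG_eq]
  have hAq : ∀ m : Fin n,
      RK.phiG F (RK.wX F n) (k - 1) (X (Sum.inl m)) ^ (Fintype.card F)
        = ∑ i ∈ Finset.range k,
            (-1 : MvPolynomial (Fin n ⊕ Fin n) F) ^ (k - 1 - i)
              * RK.cG F (RK.wX F n) (k - 1 - i) (k - 1) ^ (Fintype.card F)
              * X (Sum.inl m) ^ (Fintype.card F) ^ (i + 1) := by
    intro m
    rw [hA m, hφ1, map_sum]
    refine Finset.sum_congr rfl ?_
    intro i _
    rw [map_mul, map_mul, ← hφ1, ← hφ1, ← hφ1]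
    rw [← pow_mul ((-1 : MvPolynomial (Fin n ⊕ Fin n) F)), mul_comm (k - 1 - i), pow_mul, hneg]
    rw [← pow_mul, ← pow_succ]
  -- the triple sum identity
  have hbig : ∑ i ∈ Finset.range k, ∑ j ∈ Finset.range (n - k + 1),
      (-1 : MvPolynomial (Fin n ⊕ Fin n) F) ^ (i + j + n + 1) *
        cX F n (k - 1) i ^ (Fintype.card F) * cY F n (n - k) j *
        uInv F n ((i : ℤ) - (j : ℤ) + 1) ^ (Fintype.card F ^ min (i + 1) j)
      = ∑ m : Fin n,
          RK.phiG F (RK.wX F n) (k - 1) (X (Sum.inl m)) ^ (Fintype.card F)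
            * RK.phiG F (RK.wY F n) (n - k) (X (Sum.inr m)) := by
    have step1 : ∀ i ∈ Finset.range k, ∀ j ∈ Finset.range (n - k + 1),
        (-1 : MvPolynomial (Fin n ⊕ Fin n) F) ^ (i + j + n + 1) *
          cX F n (k - 1) i ^ (Fintype.card F) * cY F n (n - k) j *
          uInv F n ((i : ℤ) - (j : ℤ) + 1) ^ (Fintype.card F ^ min (i + 1) j)
        = ∑ m : Fin n,
            ((-1 : MvPolynomial (Fin n ⊕ Fin n) F) ^ (k - 1 - i)
              * RK.cG F (RK.wX F n) (k - 1 - i) (k - 1) ^ (Fintype.card F)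
              * X (Sum.inl m) ^ (Fintype.card F) ^ (i + 1))
            * ((-1 : MvPolynomial (Fin n ⊕ Fin n) F) ^ (n - k - j)
              * RK.cG F (RK.wY F n) (n - k - j) (n - k)
              * X (Sum.inr m) ^ (Fintype.card F) ^ j) := by
      intro i hi j hj
      rw [Finset.mem_range] at hi hj
      rw [RK.uInv_pow, Finset.mul_sum]
      refine Finset.sum_congr rfl ?_
      intro m _
      rw [RK.cX_eq F n (k - 1) i (by omega) (by omega),
        RK.cY_eq F n (n - k) j (by omega) (by omega)]
      have hsign : (-1 : MvPolynomial (Fin n ⊕ Fin n) F) ^ (i + j + n + 1)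
          = (-1) ^ (k - 1 - i) * (-1) ^ (n - k - j) := by
        rw [← pow_add]
        exact RK.neg_one_pow_congr (by omega)
      rw [hsign]
      ring
    rw [Finset.sum_congr rfl (fun i hi => Finset.sum_congr rfl (fun j hj => step1 i hi j hj))]
    rw [Finset.sum_congr rfl (fun i _ => Finset.sum_comm)]
    rw [Finset.sum_comm]
    refine Finset.sum_congr rfl ?_
    intro m _
    rw [hAq m, hB m, Finset.sum_mul_sum]
  rw [hbig]
  -- collapse the sum over m to the single term m = k-1
  have hsingle : ∑ m : Fin n,
      RK.phiG F (RK.wX F n) (k - 1) (X (Sum.inl m)) ^ (Fintype.card F)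
        * RK.phiG F (RK.wY F n) (n - k) (X (Sum.inr m))
      = RK.phiG F (RK.wX F n) (k - 1) (X (Sum.inl (⟨k - 1, by omega⟩ : Fin n))) ^ (Fintype.card F)
        * RK.phiG F (RK.wY F n) (n - k) (X (Sum.inr (⟨k - 1, by omega⟩ : Fin n))) := by
    apply Finset.sum_eq_single_of_mem _ (Finset.mem_univ _)
    intro m _ hm
    have hmv : m.val ≠ k - 1 := by
      intro h; exact hm (Fin.ext h)
    rcases lt_or_gt_of_ne hmv with hlt | hgt
    · -- x-part vanishes
      have h0 : RK.phiG F (RK.wX F n) (k - 1) (X (Sum.inl m)) = 0 := by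
        apply RK.phiG_zero F (RK.wX F n) (k - 1) _ ⟨m.val, hlt⟩
        rw [RK.wX, dif_pos (by omega : m.val < n)]
      rw [h0, zero_pow (by omega : Fintype.card F ≠ 0), zero_mul]
    · -- y-part vanishes
      have h0 : RK.phiG F (RK.wY F n) (n - k) (X (Sum.inr m)) = 0 := by
        have hjv : n - 1 - m.val < n - k := by
          have := m.isLt; omega
        apply RK.phiG_zero F (RK.wY F n) (n - k) _ ⟨n - 1 - m.val, hjv⟩
        rw [RK.wY, dif_pos (by have := m.isLt; omega : n - 1 - m.val < n)]
        congr 2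
        apply Fin.ext
        show n - 1 - (n - 1 - m.val) = m.val
        have := m.isLt; omega
      rw [h0, mul_zero]
  rw [hsingle]
  -- identify with fX and fY
  have hfx : RK.phiG F (RK.wX F n) (k - 1) (X (Sum.inl (⟨k - 1, by omega⟩ : Fin n)))
      = fX F n k := by
    rw [RK.fX_eq F n k hk1 hk2, RK.fG]
    congr 1
    rw [RK.wX, dif_pos (by omega : k - 1 < n)]
  have hfy : RK.phiG F (RK.wY F n) (n - k) (X (Sum.inr (⟨k - 1, by omega⟩ : Fin n)))
      = fY F n (n + 1 - k) := by
    rw [RK.fY_eq F n (n + 1 - k) (by omega) (by omega), RK.fG]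
    have h1 : n + 1 - k - 1 = n - k := by omega
    rw [h1]
    congr 1
    rw [RK.wY, dif_pos (by omega : n - k < n)]
    congr 2
    simp only [Fin.mk.injEq]
    omega
  rw [hfx, hfy]
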